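/- Riemann-sum convergence along the logarithmic grid: for every Schwartz function g : ℝ → ℝ and every natural number k₀ ≥ 1, the sums Σ_{k=k₀}^∞ g(χ(k)/N)² · (χ(k+1) − χ(k))/N converge, as N → ∞ (N ∈ ℕ), to ∫₀^∞ g(y)² dy. -/

import Mathlib

open MeasureTheory

/-- χ(x) = log(2·√(4x² + 4x + 1) + √(16x² + 16x + 5)). -/
noncomputable def chi (x : ℝ) : ℝ :=
  Real.log (2 * Real.sqrt (4 * x ^ 2 + 4 * x + 1) + Real.sqrt (16 * x ^ 2 + 16 * x + 5))

lemma chi_eq {x : ℝ} (h : 0 ≤ x) : chi x = Real.arsinh (4 * x + 2) := by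
  unfold chi Real.arsinh
  have h1 : (4*x^2+4*x+1 : ℝ) = (2*x+1)^2 := by ring
  have h2 : (16*x^2+16*x+5 : ℝ) = 1 + (4*x+2)^2 := by ring
  rw [h1, h2, Real.sqrt_sq (by linarith)]
  congr 1; ring

lemma chi_mono {x y : ℝ} (hx : 0 ≤ x) (hxy : x ≤ y) : chi x ≤ chi y := by
  rw [chi_eq hx, chi_eq (hx.trans hxy)]
  exact Real.arsinh_le_arsinh.2 (by linarith)

lemma chi_pos {x : ℝ} (hx : 0 ≤ x) : 0 < chi x := by
  rw [chi_eq hx]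
  exact Real.arsinh_pos_iff.2 (by linarith)

lemma deriv_arsinh_le {c x : ℝ} (hc : 0 < c) (hx : c ≤ x) :
    ‖deriv Real.arsinh x‖ ≤ 1 / c := by
  rw [(Real.hasDerivAt_arsinh x).deriv]
  have h1 : c ≤ Real.sqrt (1 + x ^ 2) := by
    have : c ≤ Real.sqrt (x ^ 2) := by
      rw [Real.sqrt_sq (hc.le.trans hx)]; exact hx
    exact this.trans (Real.sqrt_le_sqrt (by linarith))
  rw [Real.norm_eq_abs, abs_of_nonneg (by positivity)]
  rw [inv_eq_one_div]
  exact one_div_le_one_div_of_le hc h1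

/-- The grid gap bound: χ(j+1) − χ(j) ≤ 1/j for j ≥ 1. -/
lemma chi_gap_le {j : ℝ} (hj : 1 ≤ j) : chi (j + 1) - chi j ≤ 1 / j := by
  have h0 : (0:ℝ) ≤ j := by linarith
  rw [chi_eq h0, chi_eq (by linarith : (0:ℝ) ≤ j + 1)]
  have key : ‖Real.arsinh (4*(j+1)+2) - Real.arsinh (4*j+2)‖ ≤
      (1 / (4*j+2)) * ‖(4*(j+1)+2) - (4*j+2)‖ := by
    refine Convex.norm_image_sub_le_of_norm_deriv_le
      (fun x _ => (Real.hasDerivAt_arsinh x).differentiableAt)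
      (fun x hx => deriv_arsinh_le (show (0:ℝ) < 4*j+2 by linarith) (Set.mem_Ici.1 hx))
      (convex_Ici _) ?_ ?_
    · exact Set.self_mem_Ici
    · exact Set.mem_Ici.2 (by linarith)
  have h2 : ‖((4*(j+1)+2) - (4*j+2) : ℝ)‖ = 4 := by
    rw [Real.norm_eq_abs, show (4*(j+1)+2) - (4*j+2) = (4:ℝ) by ring]
    norm_num
  rw [h2] at key
  have h3 : Real.arsinh (4*(j+1)+2) - Real.arsinh (4*j+2) ≤ 1/(4*j+2) * 4 :=
    (le_abs_self _).trans key
  have h4 : 1/(4*j+2) * 4 ≤ 1 / j := by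
    rw [div_mul_eq_mul_div, one_mul, div_le_div_iff₀ (by linarith) (by linarith)]
    nlinarith
  linarith

lemma chi_gap_nonneg {j : ℝ} (hj : 0 ≤ j) : 0 ≤ chi (j + 1) - chi j :=
  sub_nonneg.2 (chi_mono hj (by linarith))

/-- Riemann-sum convergence along the logarithmic grid: for a Schwartz function g and
k₀ ≥ 1, the sums Σ_{k=k₀}^∞ g(χ(k)/N)²·(χ(k+1) − χ(k))/N converge, as N → ∞,
to ∫₀^∞ g(y)² dy. -/
theorem riemann_sum_log_grid (g : SchwartzMap ℝ ℝ) (k₀ : ℕ) (hk₀ : 1 ≤ k₀) :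
    Filter.Tendsto
      (fun N : ℕ => ∑' k : ℕ,
        (g (chi ((k + k₀ : ℕ) : ℝ) / N)) ^ 2 *
          (chi (((k + k₀ : ℕ) : ℝ) + 1) - chi ((k + k₀ : ℕ) : ℝ)) / N)
      Filter.atTop
      (nhds (∫ y in Set.Ioi (0 : ℝ), (g y) ^ 2)) := by
  have hchik₀ : 0 < chi (k₀ : ℝ) := chi_pos (Nat.cast_nonneg k₀)
  set f : ℝ → ℝ := fun y => (g y) ^ 2 with hf
  have hfc : Continuous f := g.continuous.pow 2
  -- bound on g
  obtain ⟨M₀, hM₀pos, hM₀⟩ := g.decay 0 0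
  have hM₀' : ∀ x : ℝ, ‖g x‖ ≤ M₀ := fun x => by simpa using hM₀ x
  -- bound on deriv g
  obtain ⟨M₁, hM₁pos, hM₁⟩ := (SchwartzMap.derivCLM ℝ ℝ g).decay 0 0
  have hM₁' : ∀ x : ℝ, ‖deriv g x‖ ≤ M₁ := fun x => by
    have h := hM₁ x
    simpa [SchwartzMap.derivCLM_apply] using h
  -- Lipschitz bound for g
  have hgLip : ∀ u v : ℝ, ‖g u - g v‖ ≤ M₁ * ‖u - v‖ := fun u v =>
    Convex.norm_image_sub_le_of_norm_deriv_le
      (fun x _ => g.differentiableAt) (fun x _ => hM₁' x) convex_univ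
      (Set.mem_univ v) (Set.mem_univ u)
  -- Lipschitz bound for f = g^2
  set L : ℝ := 2 * M₀ * M₁ with hL
  have hLnn : 0 ≤ L := by positivity
  have hfLip : ∀ u v : ℝ, |f u - f v| ≤ L * |u - v| := by
    intro u v
    have h1 : f u - f v = (g u - g v) * (g u + g v) := by simp only [hf]; ring
    rw [h1, abs_mul]
    have h2 : |g u - g v| ≤ M₁ * |u - v| := by simpa [Real.norm_eq_abs] using hgLip u v
    have h3 : |g u + g v| ≤ 2 * M₀ := by
      have := hM₀' u; have := hM₀' v
      rw [Real.norm_eq_abs] at *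
      calc |g u + g v| ≤ |g u| + |g v| := abs_add_le _ _
        _ ≤ 2 * M₀ := by linarith
    calc |g u - g v| * |g u + g v| ≤ (M₁ * |u - v|) * (2 * M₀) := by
          apply mul_le_mul h2 h3 (abs_nonneg _)
          positivity
      _ = L * |u - v| := by rw [hL]; ring
  -- f is integrable
  have hfInt : Integrable f := by
    refine ((g.integrable (μ := volume)).norm.const_mul M₀).mono'
      hfc.aestronglyMeasurable ?_
    filter_upwards with x
    have h := hM₀' x
    have hgx : 0 ≤ ‖g x‖ := norm_nonneg _
    calc ‖f x‖ = ‖g x‖ * ‖g x‖ := by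
          simp only [hf, Real.norm_eq_abs]; rw [abs_pow]; ring
      _ ≤ M₀ * ‖g x‖ := mul_le_mul_of_nonneg_right h hgx
  -- f bounded by M₀^2
  have hfbd : ∀ x : ℝ, ‖f x‖ ≤ M₀ ^ 2 := by
    intro x
    have h := hM₀' x
    rw [Real.norm_eq_abs] at h ⊢
    calc |f x| = |g x| ^ 2 := by simp only [hf]; rw [abs_pow]
      _ ≤ M₀ ^ 2 := by nlinarith [abs_nonneg (g x)]
  -- summability of 1/(k+1)^2
  have hsq : Summable (fun k : ℕ => 1 / ((k : ℝ) + 1) ^ 2) := by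
    have h := Real.summable_one_div_nat_pow.2 (by norm_num : 1 < 2)
    have h2 := (summable_nat_add_iff 1).2 h
    refine h2.congr fun k => ?_
    push_cast
    ring
  set C₁ : ℝ := L * ∑' k : ℕ, 1 / ((k : ℝ) + 1) ^ 2 with hC₁
  have hC₁nn : 0 ≤ C₁ := by
    apply mul_nonneg hLnn
    exact tsum_nonneg fun k => by positivity
  set I : ℕ → ℝ := fun N => ∫ y in Set.Ioi (chi (k₀ : ℝ) / (N : ℝ)), f y with hI
  set S : ℕ → ℝ := fun N : ℕ => ∑' k : ℕ,
      (g (chi ((k + k₀ : ℕ) : ℝ) / N)) ^ 2 *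
        (chi (((k + k₀ : ℕ) : ℝ) + 1) - chi ((k + k₀ : ℕ) : ℝ)) / N with hS
  -- MAIN ESTIMATE
  have key : ∀ N : ℕ, 1 ≤ N → |S N - I N| ≤ C₁ / (N : ℝ) := by
    intro N hN
    have hNpos : (0 : ℝ) < N := by exact_mod_cast hN
    set yv : ℕ → ℝ := fun j => chi (j : ℝ) / N with hyv
    have hy_mono : ∀ {i j : ℕ}, i ≤ j → yv i ≤ yv j := by
      intro i j hij
      exact div_le_div_of_nonneg_right (chi_mono (Nat.cast_nonneg i) (by exact_mod_cast hij)) hNpos.le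
    set s : ℕ → Set ℝ := fun k => Set.Ioc (yv (k + k₀)) (yv (k + k₀ + 1)) with hs
    have hs_meas : ∀ k, MeasurableSet (s k) := fun k => measurableSet_Ioc
    have hs_disj : Pairwise (Function.onFun Disjoint s) := by
      intro i j hij
      rcases hij.lt_or_gt with h | h
      · refine Set.Ioc_disjoint_Ioc.2 ?_
        refine le_trans (min_le_left _ _) (le_trans ?_ (le_max_right _ _))
        exact hy_mono (by omega)
      · refine Set.Ioc_disjoint_Ioc.2 ?_
        refine le_trans (min_le_right _ _) (le_trans ?_ (le_max_left _ _))
        exact hy_mono (by omega)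
    have hunion : (⋃ k, s k) = Set.Ioi (yv k₀) := by
      apply Set.Subset.antisymm
      · refine Set.iUnion_subset fun k x hx => ?_
        exact lt_of_le_of_lt (hy_mono (by omega)) hx.1
      · intro x hx
        have hex : ∃ m : ℕ, x ≤ yv (m + k₀ + 1) := by
          obtain ⟨m, hm⟩ := exists_nat_ge (Real.sinh ((N : ℝ) * x))
          refine ⟨m, ?_⟩
          rw [hyv]
          rw [le_div_iff₀ hNpos]
          have : x * N = Real.arsinh (Real.sinh ((N : ℝ) * x)) := by
            rw [Real.arsinh_sinh]; ring
          rw [this, chi_eq (by positivity)]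
          apply Real.arsinh_le_arsinh.2
          push_cast
          linarith
        set k := Nat.find hex with hk
        have hk1 : x ≤ yv (k + k₀ + 1) := Nat.find_spec hex
        refine Set.mem_iUnion.2 ⟨k, ?_, hk1⟩
        match hk2 : k with
        | 0 => simpa using hx
        | k' + 1 =>
          have hmin : ¬ (x ≤ yv (k' + k₀ + 1)) := Nat.find_min hex (by omega)
          push_neg at hmin
          have : k' + k₀ + 1 = k' + 1 + k₀ := by omega
          rwa [← this]
    have hIntOn : IntegrableOn f (Set.Ioi (yv k₀)) := hfInt.integrableOn
    set b : ℕ → ℝ := fun k => ∫ y in s k, f y with hb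
    have hbsum : HasSum b (∫ y in Set.Ioi (yv k₀), f y) := by
      have h := MeasureTheory.hasSum_integral_iUnion (f := f) (μ := volume) hs_meas hs_disj
        (by rw [hunion]; exact hIntOn)
      rwa [hunion] at h
    set a : ℕ → ℝ := fun k => f (yv (k + k₀)) * (yv (k + k₀ + 1) - yv (k + k₀)) with ha
    have ha_eq : S N = ∑' k, a k := by
      rw [hS]
      apply tsum_congr
      intro k
      have hcast : chi (((k + k₀ : ℕ) : ℝ) + 1) = chi ((k + k₀ + 1 : ℕ) : ℝ) := by
        congr 1
        push_cast
        ring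
      rw [hcast]
      simp only [ha, hyv, hf]
      ring
    -- gap bounds
    have hδnn : ∀ k : ℕ, 0 ≤ yv (k + k₀ + 1) - yv (k + k₀) := by
      intro k
      have := hy_mono (show k + k₀ ≤ k + k₀ + 1 by omega)
      linarith
    have hδle : ∀ k : ℕ, yv (k + k₀ + 1) - yv (k + k₀) ≤ 1 / (((k : ℝ) + 1) * N) := by
      intro k
      have h1 : (1 : ℝ) ≤ ((k + k₀ : ℕ) : ℝ) := by
        have : 1 ≤ k + k₀ := by omega
        exact_mod_cast this
      have hgap := chi_gap_le h1
      have hcast : chi ((k + k₀ + 1 : ℕ) : ℝ) = chi (((k + k₀ : ℕ) : ℝ) + 1) := by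
        congr 1; push_cast; ring
      have h2 : yv (k + k₀ + 1) - yv (k + k₀) = (chi (((k + k₀ : ℕ) : ℝ) + 1) - chi ((k + k₀ : ℕ) : ℝ)) / N := by
        simp only [hyv]
        rw [hcast]
        ring
      rw [h2]
      have h3 : ((k : ℝ) + 1) ≤ ((k + k₀ : ℕ) : ℝ) := by
        have : k + 1 ≤ k + k₀ := by omega
        exact_mod_cast this
      have hkpos : (0 : ℝ) < (k : ℝ) + 1 := by positivity
      have h4 : (1 : ℝ) / ((k + k₀ : ℕ) : ℝ) ≤ 1 / ((k : ℝ) + 1) :=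
        one_div_le_one_div_of_le hkpos h3
      rw [div_le_div_iff₀ hNpos (by positivity)]
      calc (chi (((k + k₀ : ℕ) : ℝ) + 1) - chi ((k + k₀ : ℕ) : ℝ)) * (((k : ℝ) + 1) * N)
          = ((chi (((k + k₀ : ℕ) : ℝ) + 1) - chi ((k + k₀ : ℕ) : ℝ)) * ((k : ℝ) + 1)) * N := by ring
        _ ≤ 1 * N := by
            apply mul_le_mul_of_nonneg_right _ hNpos.le
            calc (chi (((k + k₀ : ℕ) : ℝ) + 1) - chi ((k + k₀ : ℕ) : ℝ)) * ((k : ℝ) + 1)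
                ≤ (1 / ((k + k₀ : ℕ) : ℝ)) * ((k : ℝ) + 1) := by
                  apply mul_le_mul_of_nonneg_right hgap hkpos.le
              _ ≤ (1 / ((k : ℝ) + 1)) * ((k : ℝ) + 1) := by
                  apply mul_le_mul_of_nonneg_right h4 hkpos.le
              _ = 1 := by field_simp
    -- c : dominating sequence
    set c : ℕ → ℝ := fun k => L * (1 / (((k : ℝ) + 1) * N)) ^ 2 with hc
    have hvol : ∀ k, (volume (s k)).toReal = yv (k + k₀ + 1) - yv (k + k₀) := by
      intro k
      rw [hs]
      simp only [Real.volume_Ioc]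
      exact ENNReal.toReal_ofReal (hδnn k)
    have hfin : ∀ k, volume (s k) < ⊤ := by
      intro k
      rw [hs]
      simp only [Real.volume_Ioc]
      exact ENNReal.ofReal_lt_top
    have hab : ∀ k : ℕ, |a k - b k| ≤ c k := by
      intro k
      have ha' : a k = ∫ _ in s k, f (yv (k + k₀)) := by
        rw [setIntegral_const, smul_eq_mul, measureReal_def, hvol k]
        simp only [ha]
        ring
      have hsub : a k - b k = ∫ y in s k, (f (yv (k + k₀)) - f y) := by
        rw [ha', hb]
        rw [integral_sub (integrableOn_const (C := f (yv (k + k₀))) (hfin k).ne) hfInt.integrableOn]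
      rw [hsub]
      set δ : ℝ := yv (k + k₀ + 1) - yv (k + k₀) with hδ
      have hbound : ∀ y ∈ s k, ‖f (yv (k + k₀)) - f y‖ ≤ L * δ := by
        intro y hy
        rw [Real.norm_eq_abs]
        refine (hfLip _ _).trans ?_
        apply mul_le_mul_of_nonneg_left _ hLnn
        rw [abs_of_nonpos (by linarith [hy.1.le] : yv (k + k₀) - y ≤ 0)]
        have := hy.2
        simp only [hδ]
        linarith [hy.1.le, hy.2]
      have h5 : ‖∫ y in s k, (f (yv (k + k₀)) - f y)‖ ≤ (L * δ) * (volume (s k)).toReal := by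
        apply norm_setIntegral_le_of_norm_le_const (hfin k) hbound
      rw [Real.norm_eq_abs] at h5
      rw [hvol k] at h5
      refine h5.trans ?_
      have hδ2 : δ ≤ 1 / (((k : ℝ) + 1) * N) := hδle k
      have hδ0 : 0 ≤ δ := hδnn k
      rw [hc]
      calc L * δ * δ ≤ L * (1 / (((k : ℝ) + 1) * N)) * (1 / (((k : ℝ) + 1) * N)) := by
            apply mul_le_mul (mul_le_mul_of_nonneg_left hδ2 hLnn) hδ2 hδ0
            positivity
        _ = L * (1 / (((k : ℝ) + 1) * N)) ^ 2 := by ring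
    have hcsum : Summable c := by
      have h1 : Summable (fun k : ℕ => L / (N : ℝ) ^ 2 * (1 / ((k : ℝ) + 1) ^ 2)) :=
        hsq.mul_left _
      refine h1.congr fun k => ?_
      rw [hc]
      have hk0 : ((k : ℝ) + 1) ≠ 0 := by positivity
      have hN0 : (N : ℝ) ≠ 0 := hNpos.ne'
      field_simp
    have hdsum : Summable (fun k => a k - b k) :=
      Summable.of_norm_bounded hcsum fun k => by
        rw [Real.norm_eq_abs]; exact hab k
    have hasum : Summable a := by
      have := hdsum.add hbsum.summable
      refine this.congr fun k => ?_
      ring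
    have htsum_c : ∑' k, c k = C₁ / (N : ℝ) ^ 2 := by
      rw [hc, hC₁]
      rw [show (fun k : ℕ => L * (1 / (((k : ℝ) + 1) * N)) ^ 2)
          = (fun k : ℕ => (L / (N : ℝ) ^ 2) * (1 / ((k : ℝ) + 1) ^ 2)) by
        funext k
        have hk0 : ((k : ℝ) + 1) ≠ 0 := by positivity
        have hN0 : (N : ℝ) ≠ 0 := hNpos.ne'
        field_simp]
      rw [tsum_mul_left]
      ring
    have hmain : |S N - I N| ≤ C₁ / (N : ℝ) ^ 2 := by
      have hIN : I N = ∑' k, b k := by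
        rw [hI, hbsum.tsum_eq, hyv]
      rw [ha_eq, hIN]
      rw [← Summable.tsum_sub hasum hbsum.summable]
      have h6 : Summable (fun k => |a k - b k|) :=
        hcsum.of_nonneg_of_le (fun k => abs_nonneg _) hab
      calc |∑' k, (a k - b k)| ≤ ∑' k, |a k - b k| := by
            have h6' : Summable fun k => ‖a k - b k‖ := by
              simpa [Real.norm_eq_abs] using h6
            have h7 := norm_tsum_le_tsum_norm (f := fun k => a k - b k) h6'
            simpa [Real.norm_eq_abs] using h7
        _ ≤ ∑' k, c k := Summable.tsum_le_tsum hab h6 hcsum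
        _ = C₁ / (N : ℝ) ^ 2 := htsum_c
    refine hmain.trans ?_
    apply div_le_div_of_nonneg_left hC₁nn hNpos
    have h1N : (1 : ℝ) ≤ (N : ℝ) := by exact_mod_cast hN
    nlinarith
  -- CONVERGENCE OF I
  have hIoc : Filter.Tendsto (fun N : ℕ => ∫ y in Set.Ioc (0 : ℝ) (chi (k₀ : ℝ) / N), f y)
      Filter.atTop (nhds 0) := by
    apply squeeze_zero_norm (a := fun N : ℕ => M₀ ^ 2 * chi (k₀ : ℝ) / N)
    · intro N
      have ha0 : 0 ≤ chi (k₀ : ℝ) / (N : ℝ) :=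
        div_nonneg hchik₀.le (Nat.cast_nonneg N)
      have hfin : volume (Set.Ioc (0 : ℝ) (chi (k₀ : ℝ) / N)) < ⊤ := by
        simp only [Real.volume_Ioc]; exact ENNReal.ofReal_lt_top
      have h := norm_setIntegral_le_of_norm_le_const (μ := volume) hfin
        (fun y _ => hfbd y)
      refine h.trans ?_
      rw [Real.volume_real_Ioc_of_le (by linarith)]
      rw [mul_div_assoc]
      apply mul_le_mul_of_nonneg_left _ (by positivity)
      linarith
    · exact tendsto_const_div_atTop_nhds_zero_nat (M₀ ^ 2 * chi (k₀ : ℝ))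
  have hsplit : ∀ N : ℕ, I N = (∫ y in Set.Ioi (0 : ℝ), f y)
      - ∫ y in Set.Ioc (0 : ℝ) (chi (k₀ : ℝ) / N), f y := by
    intro N
    have ha0 : 0 ≤ chi (k₀ : ℝ) / (N : ℝ) := div_nonneg hchik₀.le (Nat.cast_nonneg N)
    have hu : Set.Ioc (0 : ℝ) (chi (k₀ : ℝ) / N) ∪ Set.Ioi (chi (k₀ : ℝ) / N)
        = Set.Ioi (0 : ℝ) := Set.Ioc_union_Ioi_eq_Ioi ha0
    rw [← hu, setIntegral_union (Set.Ioc_disjoint_Ioi le_rfl) measurableSet_Ioi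
      hfInt.integrableOn hfInt.integrableOn]
    rw [hI]
    ring
  have hItend : Filter.Tendsto I Filter.atTop (nhds (∫ y in Set.Ioi (0 : ℝ), f y)) := by
    have h := (tendsto_const_nhds (x := ∫ y in Set.Ioi (0 : ℝ), f y)
      (f := Filter.atTop (α := ℕ))).sub hIoc
    rw [sub_zero] at h
    exact h.congr fun N => (hsplit N).symm
  -- COMBINE
  have hdiff0 : Filter.Tendsto (fun N => S N - I N) Filter.atTop (nhds 0) := by
    apply squeeze_zero_norm' (a := fun N : ℕ => C₁ / N)
    · filter_upwards [Filter.eventually_ge_atTop 1] with N hN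
      rw [Real.norm_eq_abs]
      exact key N hN
    · exact tendsto_const_div_atTop_nhds_zero_nat C₁
  have hfinal := hdiff0.add hItend
  rw [zero_add] at hfinal
  exact hfinal.congr fun N => by ring
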